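/- Let r be a prime power, m, e positive integers, q = r^m, and S_e = X + X^q + ... + X^{q^{e−1}}. Let f ∈ F_{q^e}[X]. Suppose: (i) there is a permutation polynomial f̄ of F_q with S_e(f(x)) = f̄(S_e(x)) for all x ∈ F_{q^e}; (ii) for each c ∈ F_q there exist q-linearized f_{c,i} ∈ F_r[X], a_{c,i} ∈ F_q (0 ≤ i ≤ m−1) and b_c ∈ F_{q^e} with f(x) = Σᵢ a_{c,i} f_{c,i}(x)^{r^i} + b_c for all x with S_e(x) = c; (iii) for each c, gcd(det A_c, (X^e−1)/(X−1)) = 1 in F_q[X], where A_c is the m×m matrix with (i,j) entry a_{c,j−i}^{r^i} · f̃_{c,j−i} · X^{δ(i,j)/m} (i.e., entry a_{c,j−i}^{r^i} f̃_{c,j−i} multiplied by X when i > j), with f̃ the conventional associate and subscripts mod m. Then f is a permutation polynomial of F_{q^e}. -/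

import Mathlib

open Polynomial Finset

private lemma aux_pow_fix {E : Type*} [Monoid E] {t : E} {r : ℕ} (h : t ^ r = t) (k : ℕ) :
    t ^ r ^ k = t := by
  induction k with
  | zero => simp
  | succ k ih => rw [pow_succ, pow_mul, ih, h]

private lemma aux_mem_of_pow {E : Type*} [Field E] [Fintype E] (L : Subfield E) [Fintype L]
    {q : ℕ} (hq : 1 < q) (hLcard : Fintype.card L = q) {t : E} (ht : t ^ q = t) : t ∈ L := by
  classical
  set T : Finset E := Finset.univ.filter (fun x => x ^ q = x) with hT
  have hmemT : ∀ u : E, u ∈ T ↔ u ^ q = u := by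
    intro u; simp [hT]
  have hLsub : Set.toFinset (L : Set E) ⊆ T := by
    intro u hu
    rw [Set.mem_toFinset] at hu
    rw [hmemT]
    have h1 := FiniteField.pow_card (⟨u, hu⟩ : L)
    rw [hLcard] at h1
    have h2 := congrArg (fun z : L => (z : E)) h1
    push_cast at h2
    exact h2
  have hTcard : T.card ≤ q := by
    have hgne : ((X : E[X]) ^ q - X) ≠ 0 := by
      intro h0
      have := congrArg (fun g => Polynomial.coeff g q) h0
      simp only [coeff_sub, coeff_X_pow, coeff_X, if_pos rfl, coeff_zero] at this
      rw [if_neg (by omega : ¬(1 : ℕ) = q)] at this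
      norm_num at this
    have hsub2 : T ⊆ ((X : E[X]) ^ q - X).roots.toFinset := by
      intro u hu
      rw [hmemT] at hu
      rw [Multiset.mem_toFinset, mem_roots hgne]
      simp [IsRoot, hu]
    calc T.card ≤ ((X : E[X]) ^ q - X).roots.toFinset.card := Finset.card_le_card hsub2
      _ ≤ Multiset.card ((X : E[X]) ^ q - X).roots := Multiset.toFinset_card_le _
      _ ≤ ((X : E[X]) ^ q - X).natDegree := Polynomial.card_roots' _
      _ ≤ q := by
          refine le_trans (natDegree_sub_le _ _) ?_
          simp [natDegree_X_pow, natDegree_X]; omega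
  have hcardL : (Set.toFinset (L : Set E)).card = q := by
    rw [Set.toFinset_card]
    rw [← hLcard]
    exact Fintype.card_congr (Equiv.refl _)
  have hEq : Set.toFinset (L : Set E) = T :=
    Finset.eq_of_subset_of_card_le hLsub (by rw [hcardL]; exact hTcard)
  have : t ∈ T := by rw [hmemT]; exact ht
  rw [← hEq, Set.mem_toFinset] at this
  exact this

/-- Proposition 3.1: a criterion for `f ∈ F_{q^e}[X]` to be a permutation polynomial of
`F_{q^e}`, where `q = r^m` and `S_e = X + X^q + ⋯ + X^{q^{e−1}}`.  Condition (i): `f`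
commutes with a permutation polynomial `f̄` of `F_q` via `S_e`.  Condition (ii): on each
fiber `S_e^{-1}(c)`, `f` agrees with `∑ᵢ a_{c,i} f_{c,i}^{r^i} + b_c` with `f_{c,i}`
being `q`-linearized over `F_r` and `a_{c,i} ∈ F_q`.  Condition (iii):
`gcd(det A_c, (X^e−1)/(X−1)) = 1`, where `A_c` has `(i,j)` entry
`a_{c,j−i}^{r^i}·f̃_{c,j−i}·X^{δ(i,j)/m}` (`f̃` the conventional associate, a factor of
`X` exactly when `i > j`).  Then `f` permutes `F_{q^e}`. -/
theorem stmt12 (r m e : ℕ) [NeZero m] (he : 0 < e) (hr : IsPrimePow r)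
    (E : Type*) [Field E] [Fintype E] (hE : Fintype.card E = (r ^ m) ^ e)
    (K L : Subfield E) [Fintype K] [Fintype L]
    (hK : Fintype.card K = r) (hL : Fintype.card L = r ^ m)
    (Se : Polynomial E) (hSe : Se = ∑ i ∈ Finset.range e, X ^ (r ^ m) ^ i)
    (f : Polynomial E)
    (fbar : Polynomial E)
    (hbar_coeff : ∀ i, fbar.coeff i ∈ L)
    (hbar_pp : Set.BijOn (fun x => fbar.eval x) ↑L ↑L)
    (hcomm : ∀ x : E, Se.eval (f.eval x) = fbar.eval (Se.eval x))
    (hfiber : ∀ c ∈ L, ∃ (n : ℕ) (cc : ZMod m → ℕ → E) (ac : ZMod m → E) (b : E),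
      (∀ i k, cc i k ∈ K) ∧ (∀ i, ac i ∈ L) ∧
      (∀ x : E, Se.eval x = c →
        f.eval x =
          (∑ i : ZMod m,
            ac i * ((∑ k ∈ Finset.range n, C (cc i k) * X ^ (r ^ m) ^ k).eval x) ^ r ^ i.val)
          + b) ∧
      IsCoprime
        (Matrix.det (Matrix.of fun i j : ZMod m =>
          C (ac (j - i) ^ r ^ i.val) * (∑ k ∈ Finset.range n, C (cc (j - i) k) * X ^ k) *
            (if i.val ≤ j.val then 1 else X)))
        (∑ i ∈ Finset.range e, X ^ i)) :
    Function.Bijective fun x : E => f.eval x := by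
  classical
  -- basic numerics
  obtain ⟨p, s, hpp, hs, hrp⟩ := hr
  have hp : p.Prime := hpp.nat_prime
  haveI : Fact p.Prime := ⟨hp⟩
  have hm : 0 < m := Nat.pos_of_ne_zero (NeZero.ne m)
  have hr2 : 2 ≤ r := by
    calc 2 ≤ p := hp.two_le
    _ ≤ p ^ s := Nat.le_self_pow (by omega) p
    _ = r := hrp
  have hq1 : 1 < r ^ m := Nat.one_lt_pow (by omega) hr2
  -- characteristic
  haveI hcharE : CharP E p := by
    obtain ⟨n, hPrime, hcard⟩ := FiniteField.card E (ringChar E)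
    have h1 : (ringChar E) ^ (n : ℕ) = p ^ (s * (m * e)) := by
      rw [← hcard, hE, ← hrp, ← pow_mul, ← pow_mul]
    have h2 : p ∣ ringChar E := by
      refine hp.dvd_of_dvd_pow (n := (n : ℕ)) ?_
      rw [h1]
      exact dvd_pow_self p (by positivity)
    have h3 : p = ringChar E := ((Nat.prime_dvd_prime_iff_eq hp hPrime).mp h2)
    have h4 := ringChar.charP E
    rwa [← h3] at h4
  -- Frobenius maps
  set Fr : ℕ → E →+* E := fun t => iterateFrobenius E p (s * t) with hFrdef
  have hFr : ∀ (t : ℕ) (x : E), Fr t x = x ^ r ^ t := by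
    intro t x
    rw [hFrdef]
    show x ^ p ^ (s * t) = x ^ r ^ t
    rw [pow_mul, hrp]
  -- fixed points of Frobenius
  have hLfix : ∀ u ∈ L, u ^ r ^ m = u := by
    intro u hu
    have h1 := FiniteField.pow_card (⟨u, hu⟩ : L)
    rw [hL] at h1
    have h2 := congrArg (fun z : L => (z : E)) h1
    push_cast at h2
    exact h2
  have hKfix : ∀ u ∈ K, ∀ v : ℕ, u ^ r ^ v = u := by
    intro u hu v
    have h1 := FiniteField.pow_card (⟨u, hu⟩ : K)
    rw [hK] at h1
    have h2 := congrArg (fun z : K => (z : E)) h1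
    push_cast at h2
    exact aux_pow_fix h2 v
  have hKL : ∀ u ∈ K, u ∈ L := fun u hu =>
    aux_mem_of_pow L hq1 hL (hKfix u hu m)
  have hEfix : ∀ t : E, t ^ ((r ^ m) ^ e) = t := by
    intro t
    have := FiniteField.pow_card t
    rwa [hE] at this
  -- the ring hom Φ : L[X] →+* AddMonoid.End E
  set ψ : ↥L →+* AddMonoid.End E :=
    { toFun := fun a => AddMonoidHom.mulLeft (a : E)
      map_one' := by
        refine AddMonoidHom.ext fun x => ?_
        show ((1 : ↥L) : E) * x = x
        simp
      map_mul' := by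
        intro a b
        refine AddMonoidHom.ext fun x => ?_
        show ((a * b : ↥L) : E) * x = (a : E) * ((b : E) * x)
        push_cast
        ring
      map_zero' := by
        refine AddMonoidHom.ext fun x => ?_
        show ((0 : ↥L) : E) * x = 0
        simp
      map_add' := by
        intro a b
        refine AddMonoidHom.ext fun x => ?_
        show ((a + b : ↥L) : E) * x = (a : E) * x + (b : E) * x
        push_cast
        ring } with hψdef
  have hψ : ∀ (a : ↥L) (t : E), ψ a t = (a : E) * t := fun a t => rfl
  set φq : AddMonoid.End E := (Fr m).toAddMonoidHom with hφqdef
  have hφq : ∀ t : E, φq t = t ^ r ^ m := fun t => hFr m t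
  have hcomm' : ∀ a : ↥L, Commute (ψ a) φq := by
    intro a
    refine AddMonoidHom.ext fun t => ?_
    show ψ a (φq t) = φq (ψ a t)
    rw [hψ, hφq, hφq, hψ, mul_pow, hLfix _ a.2]
  set Φ : Polynomial ↥L →+* AddMonoid.End E := Polynomial.eval₂RingHom' ψ φq hcomm' with hΦdef
  have hΦC : ∀ (a : ↥L) (t : E), Φ (C a) t = (a : E) * t := by
    intro a t
    have : Φ (C a) = ψ a := eval₂_C _ _
    rw [this, hψ]
  have hΦX : Φ X = φq := eval₂_X _ _
  have hpow : ∀ (k : ℕ) (t : E), (φq ^ k) t = t ^ (r ^ m) ^ k := by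
    intro k
    induction k with
    | zero => intro t; simp
    | succ k ih =>
      intro t
      rw [pow_succ]
      show (φq ^ k) (φq t) = t ^ (r ^ m) ^ (k + 1)
      rw [ih, hφq, ← pow_mul, ← pow_succ']
  have hΦXk : ∀ (k : ℕ) (t : E), Φ (X ^ k) t = t ^ (r ^ m) ^ k := by
    intro k t
    rw [map_pow, hΦX, hpow]
  have hΦeval : ∀ (g : ℕ → ↥L) (N : ℕ) (t : E),
      Φ (∑ k ∈ range N, C (g k) * X ^ k) t = ∑ k ∈ range N, (g k : E) * t ^ (r ^ m) ^ k := by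
    intro g N t
    rw [map_sum]
    erw [AddMonoidHom.finset_sum_apply]
    refine Finset.sum_congr rfl fun k _ => ?_
    rw [map_mul]
    show Φ (C (g k)) (Φ (X ^ k) t) = (g k : E) * t ^ (r ^ m) ^ k
    rw [hΦXk, hΦC]
  -- the trace polynomial
  set PL : Polynomial ↥L := ∑ i ∈ range e, X ^ i with hPLdef
  have hSeΦ : ∀ t : E, Se.eval t = ∑ i ∈ range e, t ^ (r ^ m) ^ i := by
    intro t
    rw [hSe, eval_finset_sum]
    refine Finset.sum_congr rfl fun i _ => ?_
    simp
  have hΦP : ∀ t : E, Φ PL t = Se.eval t := by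
    intro t
    rw [hPLdef, map_sum]
    erw [AddMonoidHom.finset_sum_apply]
    rw [hSeΦ]
    exact Finset.sum_congr rfl fun i _ => hΦXk i t
  -- Se commutes with Frobenius powers
  have hSeFr : ∀ (v : ℕ) (t : E), Se.eval (t ^ r ^ v) = (Se.eval t) ^ r ^ v := by
    intro v t
    rw [hSeΦ, hSeΦ]
    calc ∑ i ∈ range e, (t ^ r ^ v) ^ (r ^ m) ^ i
        = ∑ i ∈ range e, Fr v (t ^ (r ^ m) ^ i) := by
          refine Finset.sum_congr rfl fun i _ => ?_
          rw [hFr, ← pow_mul, mul_comm, pow_mul]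
      _ = Fr v (∑ i ∈ range e, t ^ (r ^ m) ^ i) := (map_sum (Fr v) _ _).symm
      _ = (∑ i ∈ range e, t ^ (r ^ m) ^ i) ^ r ^ v := hFr _ _
  -- Se takes values in L
  have hSemem : ∀ t : E, Se.eval t ∈ L := by
    intro t
    refine aux_mem_of_pow L hq1 hL ?_
    have h1 : (Se.eval t) ^ r ^ m = Se.eval (t ^ r ^ m) := (hSeFr m t).symm
    rw [h1, hSeΦ, hSeΦ]
    have key : ∀ i : ℕ, (t ^ r ^ m) ^ (r ^ m) ^ i = t ^ (r ^ m) ^ (i + 1) := by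
      intro i
      rw [← pow_mul, ← pow_succ']
    calc ∑ i ∈ range e, (t ^ r ^ m) ^ (r ^ m) ^ i
        = ∑ i ∈ range e, t ^ (r ^ m) ^ (i + 1) := Finset.sum_congr rfl fun i _ => key i
      _ = ∑ i ∈ range e, t ^ (r ^ m) ^ i := by
          have h2 : ∑ i ∈ range e, t ^ (r ^ m) ^ (i + 1) + t ^ (r ^ m) ^ 0
              = ∑ i ∈ range e, t ^ (r ^ m) ^ i + t ^ (r ^ m) ^ e := by
            rw [← Finset.sum_range_succ' (fun i => t ^ (r ^ m) ^ i) e,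
              ← Finset.sum_range_succ (fun i => t ^ (r ^ m) ^ i) e]
          have h3 : t ^ (r ^ m) ^ e = t ^ (r ^ m) ^ 0 := by rw [hEfix, pow_zero, pow_one]
          rw [h3] at h2
          exact add_right_cancel h2
  -- reduce to injectivity
  rw [← Finite.injective_iff_bijective]
  intro x y hxy
  simp only at hxy
  have hSexy : Se.eval x = Se.eval y := by
    refine hbar_pp.injOn (hSemem x) (hSemem y) ?_
    show fbar.eval (Se.eval x) = fbar.eval (Se.eval y)
    rw [← hcomm x, ← hcomm y, hxy]
  obtain ⟨n, cc, ac, b, hcc, hac, hfib, hcop⟩ := hfiber (Se.eval x) (hSemem x)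
  -- subfield-valued data
  set g' : ZMod m → Polynomial ↥L :=
    fun i => ∑ k ∈ range n, C (⟨cc i k, hKL _ (hcc i k)⟩ : ↥L) * X ^ k with hg'def
  set a' : ZMod m → ↥L := fun i => ⟨ac i, hac i⟩ with ha'def
  have hGΦ : ∀ (i : ZMod m) (t : E), Φ (g' i) t = ∑ k ∈ range n, cc i k * t ^ (r ^ m) ^ k :=
    fun i t => hΦeval _ n t
  have hGeval : ∀ (i : ZMod m) (t : E),
      (∑ k ∈ range n, C (cc i k) * X ^ (r ^ m) ^ k).eval t = Φ (g' i) t := by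
    intro i t
    rw [hGΦ, eval_finset_sum]
    refine Finset.sum_congr rfl fun k _ => ?_
    simp
  have hKcomm : ∀ (i : ZMod m) (v : ℕ) (t : E),
      (Φ (g' i) t) ^ r ^ v = Φ (g' i) (t ^ r ^ v) := by
    intro i v t
    rw [hGΦ, hGΦ]
    calc (∑ k ∈ range n, cc i k * t ^ (r ^ m) ^ k) ^ r ^ v
        = Fr v (∑ k ∈ range n, cc i k * t ^ (r ^ m) ^ k) := (hFr v _).symm
      _ = ∑ k ∈ range n, Fr v (cc i k * t ^ (r ^ m) ^ k) := map_sum _ _ _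
      _ = ∑ k ∈ range n, cc i k * (t ^ r ^ v) ^ (r ^ m) ^ k := by
          refine Finset.sum_congr rfl fun k _ => ?_
          rw [map_mul, hFr v (cc i k), hFr v (t ^ (r ^ m) ^ k), hKfix _ (hcc i k) v]
          congr 1
          rw [← pow_mul, mul_comm, pow_mul]
  set z : E := x - y with hzdef
  have hfrsub : ∀ (a b : E) (v : ℕ), (a - b) ^ r ^ v = a ^ r ^ v - b ^ r ^ v := by
    intro a b v
    rw [← hFr v (a - b), ← hFr v a, ← hFr v b, map_sub]
  have h0 : ∑ i : ZMod m, ac i * (Φ (g' i) z) ^ r ^ i.val = 0 := by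
    have hx' : f.eval x - b = ∑ i : ZMod m, ac i * (Φ (g' i) x) ^ r ^ i.val := by
      rw [hfib x rfl, add_sub_cancel_right]
      exact Finset.sum_congr rfl fun i _ => by rw [hGeval]
    have hy' : f.eval y - b = ∑ i : ZMod m, ac i * (Φ (g' i) y) ^ r ^ i.val := by
      rw [hfib y hSexy.symm, add_sub_cancel_right]
      exact Finset.sum_congr rfl fun i _ => by rw [hGeval]
    have hsub : ∀ i : ZMod m, ac i * (Φ (g' i) z) ^ r ^ i.val
        = ac i * (Φ (g' i) x) ^ r ^ i.val - ac i * (Φ (g' i) y) ^ r ^ i.val := by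
      intro i
      have h1 : Φ (g' i) z = Φ (g' i) x - Φ (g' i) y := map_sub (Φ (g' i)) x y
      rw [h1, hfrsub, mul_sub]
    calc ∑ i : ZMod m, ac i * (Φ (g' i) z) ^ r ^ i.val
        = ∑ i : ZMod m, (ac i * (Φ (g' i) x) ^ r ^ i.val
            - ac i * (Φ (g' i) y) ^ r ^ i.val) := Finset.sum_congr rfl fun i _ => hsub i
      _ = (∑ i : ZMod m, ac i * (Φ (g' i) x) ^ r ^ i.val)
            - ∑ i : ZMod m, ac i * (Φ (g' i) y) ^ r ^ i.val := Finset.sum_sub_distrib _ _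
      _ = (f.eval x - b) - (f.eval y - b) := by rw [← hx', ← hy']
      _ = 0 := by rw [hxy]; ring
  -- the vector of Frobenius twists of z
  set w : ZMod m → E := fun sI => z ^ r ^ sI.val with hwdef
  have hztr : Se.eval z = 0 := by
    have h1 : Se.eval z = Se.eval x - Se.eval y := by
      rw [← hΦP, ← hΦP, ← hΦP, hzdef, map_sub]
    rw [h1, hSexy, sub_self]
  have hwtr : ∀ sI : ZMod m, Φ PL (w sI) = 0 := by
    intro sI
    show Φ PL (z ^ r ^ sI.val) = 0
    rw [hΦP, hSeFr, hztr, zero_pow (pow_ne_zero _ (by omega))]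
  have hval : ∀ i j : ZMod m, (i + j).val = (i.val + j.val) % m := fun i j => ZMod.val_add i j
  have hvlt : ∀ i : ZMod m, i.val < m := fun i => ZMod.val_lt i
  have hzsplit : ∀ i j : ZMod m, z ^ r ^ (i.val + j.val)
      = if j.val ≤ (i + j).val then w (i + j) else (w (i + j)) ^ r ^ m := by
    intro i j
    have hi := hvlt i
    have hj := hvlt j
    have hv := hval i j
    by_cases hc : i.val + j.val < m
    · have hcond : j.val ≤ (i + j).val := by rw [hv, Nat.mod_eq_of_lt hc]; omega
      rw [if_pos hcond]
      show z ^ r ^ (i.val + j.val) = z ^ r ^ (i + j).val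
      rw [hv, Nat.mod_eq_of_lt hc]
    · have hge : m ≤ i.val + j.val := le_of_not_gt hc
      have hmod : (i.val + j.val) % m = i.val + j.val - m := by
        rw [Nat.mod_eq_sub_mod hge, Nat.mod_eq_of_lt (by omega)]
      have hcond : ¬ j.val ≤ (i + j).val := by rw [hv, hmod]; omega
      rw [if_neg hcond]
      show z ^ r ^ (i.val + j.val) = (z ^ r ^ (i + j).val) ^ r ^ m
      rw [hv, hmod, ← pow_mul, ← pow_add]
      congr 1
      congr 1
      omega
  -- the matrix over L[X]
  set B : Matrix (ZMod m) (ZMod m) (Polynomial ↥L) :=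
    Matrix.of (fun i j : ZMod m =>
      C (a' (j - i) ^ r ^ i.val) * g' (j - i) * (if i.val ≤ j.val then 1 else X)) with hBdef
  have hrow : ∀ jI : ZMod m, ∑ sI : ZMod m, Φ (B jI sI) (w sI) = 0 := by
    intro jI
    have h3 : ∀ i : ZMod m, Fr jI.val (ac i * (Φ (g' i) z) ^ r ^ i.val)
        = (ac i) ^ r ^ jI.val * (Φ (g' i) z) ^ r ^ (i.val + jI.val) := by
      intro i
      rw [map_mul, map_pow, hFr jI.val (ac i), hFr jI.val (Φ (g' i) z), ← pow_mul, ← pow_add,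
        Nat.add_comm jI.val i.val]
    have h1 : ∑ i : ZMod m, (ac i) ^ r ^ jI.val * (Φ (g' i) z) ^ r ^ (i.val + jI.val) = 0 := by
      have h2 := congrArg (Fr jI.val) h0
      rw [map_zero, map_sum] at h2
      rw [← h2]
      exact Finset.sum_congr rfl fun i _ => (h3 i).symm
    have h4 : ∀ i : ZMod m, (Φ (g' i) z) ^ r ^ (i.val + jI.val)
        = Φ (g' i) (if jI.val ≤ (i + jI).val then w (i + jI) else (w (i + jI)) ^ r ^ m) := by
      intro i
      rw [hKcomm, hzsplit i jI]
    have h5 : ∀ i : ZMod m, Φ (B jI (i + jI)) (w (i + jI))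
        = (ac i) ^ r ^ jI.val * (Φ (g' i) z) ^ r ^ (i.val + jI.val) := by
      intro i
      rw [h4 i]
      have hsimp : (i + jI) - jI = i := add_sub_cancel_right i jI
      show Φ (C (a' ((i + jI) - jI) ^ r ^ jI.val) * g' ((i + jI) - jI) *
          (if jI.val ≤ (i + jI).val then 1 else X)) (w (i + jI)) = _
      rw [hsimp, map_mul, map_mul]
      by_cases hc : jI.val ≤ (i + jI).val
      · rw [if_pos hc, if_pos hc, map_one]
        show Φ (C (a' i ^ r ^ jI.val)) (Φ (g' i) ((1 : AddMonoid.End E) (w (i + jI)))) = _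
        rw [AddMonoid.End.one_apply, hΦC]
        push_cast
        rfl
      · rw [if_neg hc, if_neg hc, hΦX]
        show Φ (C (a' i ^ r ^ jI.val)) (Φ (g' i) (φq (w (i + jI)))) = _
        rw [hφq, hΦC]
        push_cast
        rfl
    calc ∑ sI : ZMod m, Φ (B jI sI) (w sI)
        = ∑ i : ZMod m, Φ (B jI (i + jI)) (w (i + jI)) :=
          (Fintype.sum_equiv (Equiv.addRight jI)
            (fun i => Φ (B jI (i + jI)) (w (i + jI)))
            (fun sI => Φ (B jI sI) (w sI)) (fun i => rfl)).symm
      _ = ∑ i : ZMod m, (ac i) ^ r ^ jI.val * (Φ (g' i) z) ^ r ^ (i.val + jI.val) :=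
          Finset.sum_congr rfl fun i _ => h5 i
      _ = 0 := h1
  -- kill each twist by the adjugate
  have hdet : ∀ kI : ZMod m, Φ B.det (w kI) = 0 := by
    intro kI
    have hAdj := Matrix.adjugate_mul B
    have h6 : ∀ jI : ZMod m, (B.adjugate * B) kI jI = if kI = jI then B.det else 0 := by
      intro jI
      rw [hAdj, Matrix.smul_apply, Matrix.one_apply]
      split <;> simp
    have h7 : ∑ jI : ZMod m, Φ ((B.adjugate * B) kI jI) (w jI) = Φ B.det (w kI) := by
      calc ∑ jI : ZMod m, Φ ((B.adjugate * B) kI jI) (w jI)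
          = ∑ jI : ZMod m, (if kI = jI then Φ B.det (w jI) else 0) := by
            refine Finset.sum_congr rfl fun jI _ => ?_
            rw [h6 jI]
            by_cases hc : kI = jI
            · rw [if_pos hc, if_pos hc]
            · rw [if_neg hc, if_neg hc, map_zero]
              rfl
        _ = Φ B.det (w kI) := by rw [Finset.sum_ite_eq]; simp
    have h8 : ∑ jI : ZMod m, Φ ((B.adjugate * B) kI jI) (w jI) = 0 := by
      calc ∑ jI : ZMod m, Φ ((B.adjugate * B) kI jI) (w jI)
          = ∑ jI : ZMod m, ∑ iI : ZMod m, Φ (B.adjugate kI iI) (Φ (B iI jI) (w jI)) := by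
            refine Finset.sum_congr rfl fun jI _ => ?_
            rw [Matrix.mul_apply, map_sum]
            erw [AddMonoidHom.finset_sum_apply]
            exact Finset.sum_congr rfl fun iI _ => by rw [map_mul]; rfl
        _ = ∑ iI : ZMod m, Φ (B.adjugate kI iI) (∑ jI : ZMod m, Φ (B iI jI) (w jI)) := by
            rw [Finset.sum_comm]
            exact Finset.sum_congr rfl fun iI _ => (map_sum (Φ (B.adjugate kI iI)) _ _).symm
        _ = 0 := by
            refine Finset.sum_eq_zero fun iI _ => ?_
            rw [hrow iI, map_zero]
    rw [← h7, h8]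
  -- translate the coprimality hypothesis
  have hBmap : B.map (Polynomial.map (L.subtype)) = Matrix.of (fun i j : ZMod m =>
      C (ac (j - i) ^ r ^ i.val) * (∑ k ∈ range n, C (cc (j - i) k) * X ^ k) *
        (if i.val ≤ j.val then 1 else X)) := by
    refine Matrix.ext fun iI jI => ?_
    show Polynomial.map (L.subtype) (C (a' (jI - iI) ^ r ^ iI.val) * g' (jI - iI) *
        (if iI.val ≤ jI.val then 1 else X)) = _
    rw [Polynomial.map_mul, Polynomial.map_mul]
    congr 1
    · congr 1
      · rw [Polynomial.map_C]
        congr 1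
      · rw [hg'def]
        simp only [Polynomial.map_sum, Polynomial.map_mul, Polynomial.map_C, Polynomial.map_pow,
          Polynomial.map_X]
        rfl
    · by_cases hc : iI.val ≤ jI.val
      · rw [if_pos hc, Polynomial.map_one]
        exact (if_pos hc).symm
      · rw [if_neg hc, Polynomial.map_X]
        exact (if_neg hc).symm
  have hcop2 : IsCoprime B.det PL := by
    refine (Polynomial.isCoprime_map (L.subtype : ↥L →+* E)).mp ?_
    have hd : (B.det).map (L.subtype : ↥L →+* E)
        = (Matrix.of (fun i j : ZMod m =>
          C (ac (j - i) ^ r ^ i.val) * (∑ k ∈ range n, C (cc (j - i) k) * X ^ k) *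
            (if i.val ≤ j.val then 1 else X))).det := by
      have h13 := RingHom.map_det (Polynomial.mapRingHom (L.subtype : ↥L →+* E)) B
      rw [Polynomial.coe_mapRingHom] at h13
      rw [h13]
      exact congrArg Matrix.det hBmap
    have hP : PL.map (L.subtype : ↥L →+* E) = ∑ i ∈ range e, (X : E[X]) ^ i := by
      rw [hPLdef]
      simp only [Polynomial.map_sum, Polynomial.map_pow, Polynomial.map_X]
    rw [hd, hP]
    exact hcop
  obtain ⟨u, v, huv⟩ := hcop2
  -- conclude
  have hz : z = 0 := by
    have h10 : Φ (u * B.det + v * PL) (w 0) = w 0 := by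
      rw [huv, map_one, AddMonoid.End.one_apply]
    have h11 : Φ (u * B.det + v * PL) (w 0) = 0 := by
      rw [map_add, map_mul, map_mul]
      show Φ u (Φ B.det (w 0)) + Φ v (Φ PL (w 0)) = 0
      rw [hdet 0, hwtr 0, map_zero, map_zero, add_zero]
    have h12 : w 0 = z := by
      show z ^ r ^ (0 : ZMod m).val = z
      rw [ZMod.val_zero, pow_zero, pow_one]
    rw [h10, h12] at h11
    exact h11
  have hxy2 : x - y = 0 := by rw [← hzdef]; exact hz
  exact sub_eq_zero.mp hxy2
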